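/- Let N = n²M where n is a positive divisor of 24 and M is a squarefree positive integer, and let ℓ be an integer with gcd(ℓ, N) = 1. Let m | N, write h = h(m), and let k be an integer. Let a/c be a cusp of X_0(N) with c | N and gcd(a,c) = 1, and write (mha + kc)/(hc) in reduced form with denominator c' > 0, and (mhℓ'a + ℓ'kc)/(hc) in reduced form with denominator c'' > 0, where ℓ' is an integer with ℓℓ' ≡ 1 (mod N). Then c' = c''; consequently the order of η_{m,k} at the cusp a/c, namely cN/(24·m·(c')²·gcd(c, N/c)), equals the order of η_{m,ℓ'k} at the cusp ℓ'a/c. -/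

import Mathlib

/-- `hh N m` is the largest positive integer `h` with `m·h² ∣ N` (for `m ∣ N`, `N > 0`). -/
def hh (N m : ℕ) : ℕ := Nat.findGreatest (fun h => m * h ^ 2 ∣ N) N

/-- If `a₁/c₁` is the reduced form of `X/H` then `c₁ * gcd(X,H) = H`. -/
lemma key_lemma (X H a₁ c₁ : ℤ) (hH : 0 < H) (hc : 0 < c₁)
    (hcop : Int.gcd a₁ c₁ = 1) (heq : a₁ * H = X * c₁) :
    c₁ * (Int.gcd X H : ℤ) = H := by
  have hc₁H : c₁ ∣ H := by
    have h1 : c₁ ∣ a₁ * H := ⟨X, by linarith⟩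
    exact (Int.isCoprime_iff_gcd_eq_one.mpr hcop).symm.dvd_of_dvd_mul_left h1
  obtain ⟨d, hd⟩ := hc₁H
  have hdpos : 0 < d := by
    by_contra hle
    push_neg at hle
    nlinarith
  have hX : a₁ * d = X := by
    have h2 : (a₁ * d) * c₁ = X * c₁ := by rw [hd] at heq; linarith
    exact mul_right_cancel₀ (ne_of_gt hc) h2
  have hgcd : Int.gcd X H = d.natAbs := by
    rw [← hX, hd, mul_comm c₁ d, mul_comm a₁ d, Int.gcd_mul_left, hcop, mul_one]
  rw [hgcd, Int.natAbs_of_nonneg hdpos.le, hd]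

theorem reduced_denominators_eq
    (n M N : ℕ) (hn : n ∣ 24) (hnpos : 0 < n) (hM : Squarefree M) (hMpos : 0 < M)
    (hN : N = n ^ 2 * M)
    (ℓ ℓ' : ℤ) (hℓ : Int.gcd ℓ (N : ℤ) = 1) (hℓℓ' : (N : ℤ) ∣ ℓ * ℓ' - 1)
    (m : ℕ) (hm : m ∣ N) (k : ℤ)
    (c : ℕ) (hc : c ∣ N) (hcpos : 0 < c) (a : ℤ) (hac : Int.gcd a (c : ℤ) = 1)
    (a₁ c₁ : ℤ) (hc₁pos : 0 < c₁) (hcop₁ : Int.gcd a₁ c₁ = 1)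
    (hred₁ : (a₁ : ℚ) / (c₁ : ℚ) =
      ((m : ℚ) * (hh N m) * a + k * c) / ((hh N m : ℚ) * c))
    (a₂ c₂ : ℤ) (hc₂pos : 0 < c₂) (hcop₂ : Int.gcd a₂ c₂ = 1)
    (hred₂ : (a₂ : ℚ) / (c₂ : ℚ) =
      ((m : ℚ) * (hh N m) * ℓ' * a + ℓ' * k * c) / ((hh N m : ℚ) * c)) :
    c₁ = c₂ ∧
    (c : ℚ) * N / (24 * m * (c₁ : ℚ) ^ 2 * Nat.gcd c (N / c)) =
      (c : ℚ) * N / (24 * m * (c₂ : ℚ) ^ 2 * Nat.gcd c (N / c)) := by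
  set h := hh N m with hh_def
  have hNpos : 0 < N := by rw [hN]; positivity
  have h1 : m * 1 ^ 2 ∣ N := by simpa using hm
  have hhpos : 1 ≤ h := Nat.le_findGreatest hNpos h1
  have hspec : m * h ^ 2 ∣ N := Nat.findGreatest_spec (P := fun h => m * h ^ 2 ∣ N) hNpos h1
  have hhN : h ∣ N :=
    dvd_trans (dvd_trans (dvd_pow_self h two_ne_zero) (dvd_mul_left _ m)) hspec
  -- ℓ' is coprime to N, hence to h*c
  obtain ⟨t, ht⟩ := hℓℓ'
  have hcopℓ'N : IsCoprime ℓ' (N : ℤ) := ⟨ℓ, -t, by linarith⟩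
  have hcoph : IsCoprime ℓ' ((h : ℤ)) :=
    hcopℓ'N.of_isCoprime_of_dvd_right (by exact_mod_cast Int.natCast_dvd_natCast.mpr hhN)
  have hcopc : IsCoprime ℓ' ((c : ℤ)) :=
    hcopℓ'N.of_isCoprime_of_dvd_right (by exact_mod_cast Int.natCast_dvd_natCast.mpr hc)
  have hcopH : IsCoprime ℓ' ((h : ℤ) * c) := hcoph.mul_right hcopc
  -- positivity facts
  have hHpos : (0 : ℤ) < (h : ℤ) * c := by
    have : 0 < h * c := Nat.mul_pos hhpos hcpos
    exact_mod_cast this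
  have hHQne : ((h : ℚ) * c) ≠ 0 := by
    have : (0 : ℚ) < (h : ℚ) * c := by exact_mod_cast hHpos
    exact ne_of_gt this
  have hc₁Qne : (c₁ : ℚ) ≠ 0 := by exact_mod_cast ne_of_gt hc₁pos
  have hc₂Qne : (c₂ : ℚ) ≠ 0 := by exact_mod_cast ne_of_gt hc₂pos
  -- integer cross-multiplied equations
  have e₁ : a₁ * ((h : ℤ) * c) = ((m : ℤ) * h * a + k * c) * c₁ := by
    rw [div_eq_div_iff hc₁Qne hHQne] at hred₁
    exact_mod_cast hred₁
  have e₂ : a₂ * ((h : ℤ) * c) = (ℓ' * ((m : ℤ) * h * a + k * c)) * c₂ := by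
    rw [div_eq_div_iff hc₂Qne hHQne] at hred₂
    have : (a₂ : ℚ) * ((h : ℚ) * c) = ((ℓ' : ℚ) * ((m : ℚ) * h * a + k * c)) * c₂ := by
      rw [hred₂]; ring
    exact_mod_cast this
  set X : ℤ := (m : ℤ) * h * a + k * c with hXdef
  set H : ℤ := (h : ℤ) * c with hHdef
  have k₁ := key_lemma X H a₁ c₁ hHpos hc₁pos hcop₁ e₁
  have k₂ := key_lemma (ℓ' * X) H a₂ c₂ hHpos hc₂pos hcop₂ e₂
  -- the two gcds agree
  have hg : Int.gcd (ℓ' * X) H = Int.gcd X H := by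
    have hco : Nat.Coprime ℓ'.natAbs H.natAbs := Int.isCoprime_iff_gcd_eq_one.mp hcopH
    show Nat.gcd (ℓ' * X).natAbs H.natAbs = Nat.gcd X.natAbs H.natAbs
    rw [Int.natAbs_mul]
    exact Nat.Coprime.gcd_mul_left_cancel _ hco
  rw [hg] at k₂
  have hgpos : (0 : ℤ) < (Int.gcd X H : ℤ) := by
    have : Int.gcd X H ≠ 0 := by
      intro h0
      have := Int.gcd_eq_zero_iff.mp h0
      exact absurd this.2 (ne_of_gt hHpos)
    exact_mod_cast Nat.pos_of_ne_zero this
  have hcc : c₁ = c₂ := mul_right_cancel₀ (ne_of_gt hgpos) (k₁.trans k₂.symm)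
  exact ⟨hcc, by rw [hcc]⟩
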